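/- The limit as n → ∞ of B(n)/n equals 2/3. -/

import Mathlib

/-- The auxiliary sequence: `a 1 = 3`, `a i = 3 * a (i-1) - 1` for `i ≥ 2`. -/
def a : ℕ → ℕ
  | 0 => 0
  | 1 => 3
  | n + 2 => 3 * a (n + 1) - 1

/-- `R(m, i) = max(0, ⌊(m − a i − 1)/3^i⌋)` (truncated ℕ-subtraction gives the max). -/
def Rmi (m i : ℕ) : ℕ := (m - a i - 1) / 3 ^ i

/-- `R(m) = ∑_{i=1}^∞ R(m, i)`; all terms with `i > m` vanish, so a finite sum suffices. -/
def R (m : ℕ) : ℕ := ∑ i ∈ Finset.Icc 1 m, Rmi m i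

/-- `m` has a witness pair `(k, i)` of positive integers with `m = k·3^i + a i`. -/
def HasWitness (m : ℕ) : Prop := ∃ k i : ℕ, 1 ≤ k ∧ 1 ≤ i ∧ m = k * 3 ^ i + a i

/-- `B` is the `B`-sequence: `B 0 = 0`, `B n = n` for `1 ≤ n ≤ 5`, and
`B n = B (n - B (n-1)) + B (n - B (n-2)) + B (n - B (n-3))` for `n ≥ 6`. -/
def IsBSeq (B : ℕ → ℕ) : Prop :=
  B 0 = 0 ∧ (∀ n, 1 ≤ n → n ≤ 5 → B n = n) ∧
    ∀ n, 6 ≤ n → B n = B (n - B (n - 1)) + B (n - B (n - 2)) + B (n - B (n - 3))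


lemma a_succ (i : ℕ) (hi : 1 ≤ i) : a (i+1) = 3 * a i - 1 := by
  obtain ⟨j, rfl⟩ := Nat.exists_eq_add_of_le' hi
  rfl

lemma a_ge (i : ℕ) (hi : 1 ≤ i) : i + 2 ≤ a i := by
  induction i with
  | zero => omega
  | succ j ih =>
    rcases Nat.eq_or_lt_of_le hi with h | h
    · rw [← h]; rfl
    · have hj : 1 ≤ j := by omega
      have := ih hj
      rw [a_succ j hj]; omega

lemma Rmi_zero {m i : ℕ} (h : m ≤ a i) : Rmi m i = 0 := by
  unfold Rmi
  have : m - a i - 1 = 0 := by omega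
  simp [this]

lemma RmiS (m i : ℕ) (hi : 1 ≤ i) : Rmi m (i+1) = Rmi (m/3+1) i := by
  have ha1 : 1 ≤ a i := by have := a_ge i hi; omega
  have ha : a (i+1) = 3 * a i - 1 := a_succ i hi
  unfold Rmi
  have h1 : m - a (i+1) - 1 = m - 3 * a i := by omega
  have h2 : m/3 + 1 - a i - 1 = m/3 - a i := by omega
  rw [h1, h2]
  have h3 : (m - 3 * a i) / 3 = m / 3 - a i := by omega
  rw [pow_succ, mul_comm (3^i) 3, ← Nat.div_div_eq_div_mul, h3]

lemma Rext (m k : ℕ) (h : m ≤ k) : R m = ∑ i ∈ Finset.Icc 1 k, Rmi m i := by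
  unfold R
  apply Finset.sum_subset
  · apply Finset.Icc_subset_Icc_right h
  · intro i hik him
    simp only [Finset.mem_Icc] at hik him
    have hi1 : 1 ≤ i := hik.1
    have : m < i := by omega
    exact Rmi_zero (by have := a_ge i hi1; omega)

lemma Rrec (m : ℕ) : R m = (m - 4)/3 + R (m/3 + 1) := by
  rcases Nat.lt_or_ge m 3 with hm | hm
  · interval_cases m <;> decide
  · have h1 : Finset.Icc 1 m = insert 1 (Finset.Icc 2 m) := by
      ext x; simp [Finset.mem_Icc]; omega
    have h2 : (1:ℕ) ∉ Finset.Icc 2 m := by simp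
    rw [R, h1, Finset.sum_insert h2]
    have hRmi1 : Rmi m 1 = (m - 4)/3 := by
      unfold Rmi
      have : a 1 = 3 := rfl
      rw [this, pow_one, show m - 3 - 1 = m - 4 by omega]
    have h3 : Finset.Icc (2:ℕ) m = Finset.map (addRightEmbedding 1) (Finset.Icc 1 (m-1)) := by
      rw [Finset.map_add_right_Icc]
      congr 1; omega
    rw [hRmi1, h3, Finset.sum_map]
    have h4 : ∀ i ∈ Finset.Icc 1 (m-1), Rmi m (addRightEmbedding 1 i) = Rmi (m/3+1) i := by
      intro i hi
      simp only [Finset.mem_Icc] at hi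
      exact RmiS m i hi.1
    rw [Finset.sum_congr rfl h4, ← Rext (m/3+1) (m-1) (by omega)]

lemma Rmono : Monotone R := by
  intro x y hxy
  rw [Rext y y le_rfl, Rext x y hxy]
  apply Finset.sum_le_sum
  intro i _
  unfold Rmi
  exact Nat.div_le_div_right (by omega)

lemma Rstep (m : ℕ) : R (m+1) ≤ R m + 1 := by
  induction m using Nat.strong_induction_on with
  | _ m ih =>
    rcases Nat.lt_or_ge m 2 with hm | hm
    · interval_cases m <;> decide
    · rw [Rrec m, Rrec (m+1)]
      rcases (show (m+1)/3 = m/3 ∨ ((m+1)/3 = m/3 + 1 ∧ (m+1-4)/3 = (m-4)/3) by omega) with h | ⟨h1, h2⟩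
      · rw [h]; omega
      · rw [h1, h2]
        have := ih (m/3+1) (by omega)
        omega

lemma Rhalf (m : ℕ) : 2 * R m ≤ m := by
  induction m using Nat.strong_induction_on with
  | _ m ih =>
    rcases Nat.lt_or_ge m 2 with hm | hm
    · interval_cases m <;> decide
    · rw [Rrec m]
      have := ih (m/3+1) (by omega)
      omega

/-- `f v = v + R v`; the B-sequence is its "inverse". -/
def f (v : ℕ) : ℕ := v + R v

lemma f_mono : Monotone f := fun _ _ h => Nat.add_le_add h (Rmono h)

lemma f_step (v : ℕ) : f (v+1) ≤ f v + 2 := by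
  have := Rstep v; unfold f; omega

lemma self_le_f (v : ℕ) : v ≤ f v := Nat.le_add_right _ _

lemma f_lt {x y : ℕ} (h : x < y) : f x < f y := by
  have h1 : f (x+1) ≤ f y := f_mono h
  have h2 : R x ≤ R (x+1) := Rmono (by omega)
  unfold f at *
  omega

/-- R scaling identities -/
lemma R1 (w : ℕ) (hw : 2 ≤ w) : R (3*w-2) = (w-2) + R w := by
  rw [Rrec (3*w-2)]
  have h1 : (3*w-2-4)/3 = w - 2 := by omega
  have h2 : (3*w-2)/3 + 1 = w := by omega
  rw [h1, h2]

lemma R2 (w : ℕ) (hw : 2 ≤ w) : R (3*w-1) = (w-2) + R w := by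
  rw [Rrec (3*w-1)]
  have h1 : (3*w-1-4)/3 = w - 2 := by omega
  have h2 : (3*w-1)/3 + 1 = w := by omega
  rw [h1, h2]

lemma R3 (w : ℕ) (hw : 2 ≤ w) : R (3*w) = (w-2) + R (w+1) := by
  rw [Rrec (3*w)]
  have h1 : (3*w-4)/3 = w - 2 := by omega
  have h2 : (3*w)/3 + 1 = w + 1 := by omega
  rw [h1, h2]

/-- f scaling identities, subtraction-free forms. -/
lemma fA (u : ℕ) (hu : 1 ≤ u) : f (3*u+1) + 1 = f (u+1) + 3*u := by
  have h := R1 (u+1) (by omega)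
  have e : 3*(u+1)-2 = 3*u+1 := by omega
  rw [e] at h
  unfold f; omega

lemma fB (u : ℕ) (hu : 1 ≤ u) : f (3*u+2) = f (u+1) + 3*u := by
  have h := R2 (u+1) (by omega)
  have e : 3*(u+1)-1 = 3*u+2 := by omega
  rw [e] at h
  unfold f; omega

lemma fC (u : ℕ) (hu : 1 ≤ u) : f (3*u+3) = f (u+2) + 3*u := by
  have h := R3 (u+1) (by omega)
  have e : 3*(u+1) = 3*u+3 := by omega
  rw [e] at h
  have e2 : u+1+1 = u+2 := by omega
  rw [e2] at h
  unfold f; omega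

/-- The inverse of `f`. -/
def Cfun (n : ℕ) : ℕ := Nat.findGreatest (fun v => f v ≤ n) n

lemma f_Cfun_le (n : ℕ) : f (Cfun n) ≤ n := by
  have h0 : f 0 ≤ n := by
    have : f 0 = 0 := by decide
    omega
  exact Nat.findGreatest_spec (P := fun v => f v ≤ n) (m := 0) (Nat.zero_le n) h0

lemma lt_f_Cfun_succ (n : ℕ) : n < f (Cfun n + 1) := by
  rcases Nat.lt_or_ge n (Cfun n + 1) with h | h
  · have := self_le_f (Cfun n + 1); omega
  · by_contra hc
    have hg : Cfun n < Cfun n + 1 := Nat.lt_succ_of_le le_rfl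
    exact Nat.findGreatest_is_greatest hg h (by omega)

lemma Cfun_eq {n v : ℕ} (h1 : f v ≤ n) (h2 : n < f (v+1)) : Cfun n = v := by
  have hv : v ≤ Cfun n := Nat.le_findGreatest (le_trans (self_le_f v) h1) h1
  have : Cfun n < v + 1 := by
    by_contra hc
    have : f (v+1) ≤ f (Cfun n) := f_mono (by omega)
    have := f_Cfun_le n
    omega
  omega

lemma Cfun_le (n : ℕ) : Cfun n ≤ n := Nat.findGreatest_le n

lemma Cfun_pos {n : ℕ} (h : 1 ≤ n) : 1 ≤ Cfun n := by
  have h1 : f 1 ≤ n := by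
    have : f 1 = 1 := by decide
    omega
  exact Nat.le_findGreatest h h1

lemma Cfun_small : Cfun 0 = 0 ∧ Cfun 1 = 1 ∧ Cfun 2 = 2 ∧ Cfun 3 = 3 ∧ Cfun 4 = 4 ∧
    Cfun 5 = 5 ∧ Cfun 6 = 6 ∧ Cfun 7 = 6 := by
  have h0 : f 0 = 0 := by decide
  have h1 : f 1 = 1 := by decide
  have h2 : f 2 = 2 := by decide
  have h3 : f 3 = 3 := by decide
  have h4 : f 4 = 4 := by decide
  have h5 : f 5 = 5 := by decide
  have h6 : f 6 = 6 := by decide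
  have h7 : f 7 = 8 := by decide
  refine ⟨?_, ?_, ?_, ?_, ?_, ?_, ?_, ?_⟩ <;>
    exact Cfun_eq (by norm_num [h0,h1,h2,h3,h4,h5,h6,h7])
      (by norm_num [h0,h1,h2,h3,h4,h5,h6,h7])

/-- The key identity: `Cfun` satisfies the B-recursion. -/
lemma keyC (n : ℕ) (hn : 6 ≤ n) :
    Cfun n = Cfun (n - Cfun (n-1)) + Cfun (n - Cfun (n-2)) + Cfun (n - Cfun (n-3)) := by
  obtain ⟨c0, c1, c2, c3, c4, c5, c6, c7⟩ := Cfun_small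
  rcases Nat.lt_or_ge n 8 with h8 | h8
  · -- n = 6 or 7
    interval_cases n
    · rw [show (6:ℕ)-1 = 5 from rfl, show (6:ℕ)-2 = 4 from rfl, show (6:ℕ)-3 = 3 from rfl,
        c5, c4, c3]
      norm_num [c1, c2, c3, c6]
    · rw [show (7:ℕ)-1 = 6 from rfl, show (7:ℕ)-2 = 5 from rfl, show (7:ℕ)-3 = 4 from rfl,
        c6, c5, c4]
      norm_num [c1, c2, c3, c7]
  · -- main case: find the superblock index u = k+2
    set Q : ℕ → Prop := fun u => f (u+1) + 3*u ≤ n + 1 with hQ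
    have hQ2 : Q 2 := by
      show f 3 + 6 ≤ n + 1
      have : f 3 = 3 := by decide
      omega
    set u := Nat.findGreatest Q n with hu
    have hu2 : 2 ≤ u := Nat.le_findGreatest (by omega) hQ2
    have huspec : Q u := Nat.findGreatest_spec (m := 2) (by omega) hQ2
    have hun : u < n := by
      rcases Nat.lt_or_ge u n with h | h
      · exact h
      · exfalso
        have hun' : u ≤ n := Nat.findGreatest_le n
        have : u = n := by omega
        have := self_le_f (u+1)
        have : f (u+1) + 3*u ≤ n + 1 := huspec
        omega
    have hnotQ : ¬ Q (u+1) := Nat.findGreatest_is_greatest (Nat.lt_succ_of_le le_rfl) (by omega)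
    clear_value u
    obtain ⟨k, rfl⟩ : ∃ k, u = k + 2 := ⟨u - 2, by omega⟩
    -- abbreviations
    set X := f (k+3) with hX
    set X' := f (k+4) with hX'
    set Y := f (k+2) with hY
    have hYX : Y < X := f_lt (by omega)
    have hXX' : X < X' := f_lt (by omega)
    have hX'2 : X' ≤ X + 2 := f_step (k+3)
    -- n-range
    have hnlo : X + 3*k + 5 ≤ n := by
      have : f (k+3) + 3*(k+2) ≤ n + 1 := huspec
      omega
    have hnhi : n < X' + 3*k + 8 := by
      have : ¬ (f (k+4) + 3*(k+3) ≤ n + 1) := hnotQ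
      omega
    -- f-values on the superblock, via scaling identities
    have hb1 : f (3*k+7) = X + 3*k + 5 := by
      have h := fA (k+2) (by omega)
      rw [show 3*(k+2)+1 = 3*k+7 by ring, show k+2+1 = k+3 by ring] at h
      omega
    have hb2 : f (3*k+8) = X + 3*k + 6 := by
      have h := fB (k+2) (by omega)
      rw [show 3*(k+2)+2 = 3*k+8 by ring, show k+2+1 = k+3 by ring] at h
      omega
    have hb3 : f (3*k+9) = X' + 3*k + 6 := by
      have h := fC (k+2) (by omega)
      rw [show 3*(k+2)+3 = 3*k+9 by ring, show k+2+2 = k+4 by ring] at h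
      omega
    have hb4 : f (3*k+10) = X' + 3*k + 8 := by
      have h := fA (k+3) (by omega)
      rw [show 3*(k+3)+1 = 3*k+10 by ring, show k+3+1 = k+4 by ring] at h
      omega
    have hb0 : f (3*k+6) = X + 3*k + 3 := by
      have h := fC (k+1) (by omega)
      rw [show 3*(k+1)+3 = 3*k+6 by ring, show k+1+2 = k+3 by ring] at h
      omega
    have hbm1 : f (3*k+5) = Y + 3*k + 3 := by
      have h := fB (k+1) (by omega)
      rw [show 3*(k+1)+2 = 3*k+5 by ring, show k+1+1 = k+2 by ring] at h
      omega
    -- C-value block lemmas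
    have h1 : ∀ x, X+3*k+5 ≤ x → x < X+3*k+6 → Cfun x = 3*k+7 := fun x hx1 hx2 =>
      Cfun_eq (by omega) (by rw [show 3*k+7+1 = 3*k+8 by ring, hb2]; omega)
    have h2 : ∀ x, X+3*k+6 ≤ x → x < X'+3*k+6 → Cfun x = 3*k+8 := fun x hx1 hx2 =>
      Cfun_eq (by omega) (by rw [show 3*k+8+1 = 3*k+9 by ring, hb3]; omega)
    have h3 : ∀ x, X'+3*k+6 ≤ x → x < X'+3*k+8 → Cfun x = 3*k+9 := fun x hx1 hx2 =>
      Cfun_eq (by omega) (by rw [show 3*k+9+1 = 3*k+10 by ring, hb4]; omega)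
    have h4 : ∀ x, X+3*k+3 ≤ x → x < X+3*k+5 → Cfun x = 3*k+6 := fun x hx1 hx2 =>
      Cfun_eq (by omega) (by rw [show 3*k+6+1 = 3*k+7 by ring, hb1]; omega)
    have h5 : ∀ x, Y+3*k+3 ≤ x → x < X+3*k+3 → Cfun x = 3*k+5 := fun x hx1 hx2 =>
      Cfun_eq (by omega) (by rw [show 3*k+5+1 = 3*k+6 by ring, hb0]; omega)
    have hX1 : 3 ≤ X := by
      have := self_le_f (k+2)
      omega
    have h6 : Cfun X = k+3 := Cfun_eq le_rfl (by rw [show k+3+1 = k+4 by ring]; omega)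
    have h7 : Cfun (X-1) = k+2 := Cfun_eq (by omega) (by rw [show k+2+1 = k+3 by ring]; omega)
    have h8 : X' = X + 1 → Cfun (X+1) = k+4 := fun hL => by
      have hX'' : X' < f (k+5) := f_lt (by omega)
      exact Cfun_eq (by omega) (by rw [show k+4+1 = k+5 by ring]; omega)
    have h8' : X' = X + 2 → Cfun (X+1) = k+3 := fun hL =>
      Cfun_eq (by omega) (by rw [show k+3+1 = k+4 by ring]; omega)
    -- case analysis on the position of n
    rcases (show n = X+3*k+5 ∨ n = X+3*k+6 ∨
        (X' = X+1 ∧ (n = X+3*k+7 ∨ n = X+3*k+8)) ∨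
        (X' = X+2 ∧ (n = X+3*k+7 ∨ n = X+3*k+8 ∨ n = X+3*k+9)) by omega) with
      hc | hc | ⟨hL, hc | hc⟩ | ⟨hL, hc | hc | hc⟩
    · -- o0
      have e1 : Cfun (n-1) = 3*k+6 := by rw [show n-1 = X+3*k+4 by omega]; exact h4 _ (by omega) (by omega)
      have e2 : Cfun (n-2) = 3*k+6 := by rw [show n-2 = X+3*k+3 by omega]; exact h4 _ (by omega) (by omega)
      have e3 : Cfun (n-3) = 3*k+5 := by rw [show n-3 = X+3*k+2 by omega]; exact h5 _ (by omega) (by omega)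
      rw [e1, e2, e3, show n - (3*k+6) = X-1 by omega, show n - (3*k+5) = X by omega,
        h7, h6, h1 n (by omega) (by omega)]
      ring
    · -- o1
      have e1 : Cfun (n-1) = 3*k+7 := by rw [show n-1 = X+3*k+5 by omega]; exact h1 _ (by omega) (by omega)
      have e2 : Cfun (n-2) = 3*k+6 := by rw [show n-2 = X+3*k+4 by omega]; exact h4 _ (by omega) (by omega)
      have e3 : Cfun (n-3) = 3*k+6 := by rw [show n-3 = X+3*k+3 by omega]; exact h4 _ (by omega) (by omega)
      rw [e1, e2, e3, show n - (3*k+7) = X-1 by omega, show n - (3*k+6) = X by omega,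
        h7, h6, h2 n (by omega) (by omega)]
      ring
    · -- L=1, q0 : n = X+3k+7 = X'+3k+6
      have e1 : Cfun (n-1) = 3*k+8 := by rw [show n-1 = X+3*k+6 by omega]; exact h2 _ (by omega) (by omega)
      have e2 : Cfun (n-2) = 3*k+7 := by rw [show n-2 = X+3*k+5 by omega]; exact h1 _ (by omega) (by omega)
      have e3 : Cfun (n-3) = 3*k+6 := by rw [show n-3 = X+3*k+4 by omega]; exact h4 _ (by omega) (by omega)
      rw [e1, e2, e3, show n - (3*k+8) = X-1 by omega, show n - (3*k+7) = X by omega,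
        show n - (3*k+6) = X+1 by omega, h7, h6, h8 hL, h3 n (by omega) (by omega)]
      ring
    · -- L=1, q1 : n = X+3k+8
      have e1 : Cfun (n-1) = 3*k+9 := by rw [show n-1 = X+3*k+7 by omega]; exact h3 _ (by omega) (by omega)
      have e2 : Cfun (n-2) = 3*k+8 := by rw [show n-2 = X+3*k+6 by omega]; exact h2 _ (by omega) (by omega)
      have e3 : Cfun (n-3) = 3*k+7 := by rw [show n-3 = X+3*k+5 by omega]; exact h1 _ (by omega) (by omega)
      rw [e1, e2, e3, show n - (3*k+9) = X-1 by omega, show n - (3*k+8) = X by omega,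
        show n - (3*k+7) = X+1 by omega, h7, h6, h8 hL, h3 n (by omega) (by omega)]
      ring
    · -- L=2, o2 : n = X+3k+7
      have e1 : Cfun (n-1) = 3*k+8 := by rw [show n-1 = X+3*k+6 by omega]; exact h2 _ (by omega) (by omega)
      have e2 : Cfun (n-2) = 3*k+7 := by rw [show n-2 = X+3*k+5 by omega]; exact h1 _ (by omega) (by omega)
      have e3 : Cfun (n-3) = 3*k+6 := by rw [show n-3 = X+3*k+4 by omega]; exact h4 _ (by omega) (by omega)
      rw [e1, e2, e3, show n - (3*k+8) = X-1 by omega, show n - (3*k+7) = X by omega,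
        show n - (3*k+6) = X+1 by omega, h7, h6, h8' hL, h2 n (by omega) (by omega)]
      ring
    · -- L=2, q0 : n = X+3k+8
      have e1 : Cfun (n-1) = 3*k+8 := by rw [show n-1 = X+3*k+7 by omega]; exact h2 _ (by omega) (by omega)
      have e2 : Cfun (n-2) = 3*k+8 := by rw [show n-2 = X+3*k+6 by omega]; exact h2 _ (by omega) (by omega)
      have e3 : Cfun (n-3) = 3*k+7 := by rw [show n-3 = X+3*k+5 by omega]; exact h1 _ (by omega) (by omega)
      rw [e1, e2, e3, show n - (3*k+8) = X by omega, show n - (3*k+7) = X+1 by omega,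
        h6, h8' hL, h3 n (by omega) (by omega)]
      ring
    · -- L=2, q1 : n = X+3k+9
      have e1 : Cfun (n-1) = 3*k+9 := by rw [show n-1 = X+3*k+8 by omega]; exact h3 _ (by omega) (by omega)
      have e2 : Cfun (n-2) = 3*k+8 := by rw [show n-2 = X+3*k+7 by omega]; exact h2 _ (by omega) (by omega)
      have e3 : Cfun (n-3) = 3*k+8 := by rw [show n-3 = X+3*k+6 by omega]; exact h2 _ (by omega) (by omega)
      rw [e1, e2, e3, show n - (3*k+9) = X by omega, show n - (3*k+8) = X+1 by omega,
        h6, h8' hL, h3 n (by omega) (by omega)]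
      ring

lemma BeqC (B : ℕ → ℕ) (hB : IsBSeq B) : ∀ n, B n = Cfun n := by
  obtain ⟨c0, c1, c2, c3, c4, c5, c6, c7⟩ := Cfun_small
  intro n
  induction n using Nat.strong_induction_on with
  | _ n ih =>
    rcases Nat.lt_or_ge n 6 with h6 | h6
    · interval_cases n
      · rw [hB.1, c0]
      · rw [hB.2.1 1 (by omega) (by omega), c1]
      · rw [hB.2.1 2 (by omega) (by omega), c2]
      · rw [hB.2.1 3 (by omega) (by omega), c3]
      · rw [hB.2.1 4 (by omega) (by omega), c4]
      · rw [hB.2.1 5 (by omega) (by omega), c5]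
    · rw [hB.2.2 n h6]
      have e1 : B (n-1) = Cfun (n-1) := ih _ (by omega)
      have e2 : B (n-2) = Cfun (n-2) := ih _ (by omega)
      have e3 : B (n-3) = Cfun (n-3) := ih _ (by omega)
      rw [e1, e2, e3]
      have p1 : 1 ≤ Cfun (n-1) := Cfun_pos (by omega)
      have p2 : 1 ≤ Cfun (n-2) := Cfun_pos (by omega)
      have p3 : 1 ≤ Cfun (n-3) := Cfun_pos (by omega)
      have q1 : B (n - Cfun (n-1)) = Cfun (n - Cfun (n-1)) := ih _ (by omega)
      have q2 : B (n - Cfun (n-2)) = Cfun (n - Cfun (n-2)) := ih _ (by omega)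
      have q3 : B (n - Cfun (n-3)) = Cfun (n - Cfun (n-3)) := ih _ (by omega)
      rw [q1, q2, q3, ← keyC n h6]

/-- lower bound : 2n ≤ 3 C(n) + 3 -/
lemma Cfun_lower (n : ℕ) : 2*n ≤ 3 * Cfun n + 3 := by
  have h1 := lt_f_Cfun_succ n
  have h2 := Rhalf (Cfun n + 1)
  unfold f at h1
  omega

/-- real log bound: m ≤ 2 R m + 16 log(m+1) + 16 -/
lemma Rlog (m : ℕ) : (m:ℝ) ≤ 2 * R m + 16 * Real.log (m+1) + 16 := by
  induction m using Nat.strong_induction_on with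
  | _ m ih =>
    rcases Nat.lt_or_ge m 16 with hm | hm
    · have hR : (0:ℝ) ≤ 2 * R m := by positivity
      have hlog : (0:ℝ) ≤ Real.log (m+1) := Real.log_nonneg (by push_cast; linarith [Nat.cast_nonneg (α := ℝ) m])
      have : (m:ℝ) ≤ 16 := by exact_mod_cast Nat.le_of_lt_succ (by omega)
      linarith
    · have hrec := Rrec m
      set m' := m/3 + 1 with hm'
      have hm'lt : m' < m := by omega
      have IH := ih m' hm'lt
      -- ℕ facts
      have k1 : 3 * ((m-4)/3) + 6 ≥ m := by omega
      have k2 : 3 * m' ≥ m + 1 := by omega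
      have k3 : 2 * (m' + 1) ≤ m + 1 := by omega
      -- cast to ℝ
      have K1 : (3:ℝ) * ((m-4)/3 : ℕ) + 6 ≥ m := by exact_mod_cast k1
      have K2 : (3:ℝ) * m' ≥ m + 1 := by exact_mod_cast k2
      have K3 : (2:ℝ) * (m' + 1) ≤ m + 1 := by exact_mod_cast k3
      have hrecR : (R m : ℝ) = ((m-4)/3 : ℕ) + R m' := by exact_mod_cast hrec
      -- log inequality
      have hlog : Real.log (m'+1) + Real.log 2 ≤ Real.log (m+1) := by
        rw [← Real.log_mul (by positivity) (by norm_num)]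
        apply Real.log_le_log (by positivity)
        push_cast at K3 ⊢
        linarith
      have hlog2 : (0.6931471803:ℝ) < Real.log 2 := Real.log_two_gt_d9
      linarith

lemma Cfun_upper (n : ℕ) : 3 * (Cfun n : ℝ) ≤ 2*n + 16 * Real.log (n+1) + 16 := by
  have h1 := f_Cfun_le n
  unfold f at h1
  have h2 := Rlog (Cfun n)
  have h3 : Real.log (Cfun n + 1) ≤ Real.log (n+1) := by
    apply Real.log_le_log (by positivity)
    have := Cfun_le n
    push_cast
    exact_mod_cast by omega
  have h4 : (Cfun n : ℝ) + R (Cfun n) ≤ n := by exact_mod_cast h1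
  linarith

lemma C_tendsto : Filter.Tendsto (fun n : ℕ => (Cfun n : ℝ) / n) Filter.atTop (nhds (2/3)) := by
  have hlog : Filter.Tendsto (fun n : ℕ => Real.log (n+1) / (n+1)) Filter.atTop (nhds 0) := by
    have h1 : Filter.Tendsto (fun x : ℝ => Real.log x / x) Filter.atTop (nhds 0) := by
      have := Real.isLittleO_log_id_atTop.tendsto_div_nhds_zero
      simpa using this
    exact h1.comp (Filter.tendsto_atTop_add_const_right _ 1 tendsto_natCast_atTop_atTop)
  have hratio : Filter.Tendsto (fun n : ℕ => ((n:ℝ)+1) / n) Filter.atTop (nhds 1) := by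
    have h1 : Filter.Tendsto (fun n : ℕ => 1 + 1/(n:ℝ)) Filter.atTop (nhds 1) := by
      have : Filter.Tendsto (fun n : ℕ => 1/(n:ℝ)) Filter.atTop (nhds 0) := tendsto_one_div_atTop_nhds_zero_nat
      simpa using Filter.Tendsto.const_add 1 this
    apply h1.congr'
    filter_upwards [Filter.eventually_ge_atTop 1] with n hn
    have hn' : (n:ℝ) > 0 := by exact_mod_cast hn
    field_simp
  have hinv : Filter.Tendsto (fun n : ℕ => 1/(n:ℝ)) Filter.atTop (nhds 0) :=
    tendsto_one_div_atTop_nhds_zero_nat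
  -- upper envelope
  have hup : Filter.Tendsto (fun n : ℕ => 2/3 + (16 * Real.log (n+1) + 16)/(3*n))
      Filter.atTop (nhds (2/3)) := by
    have hz : Filter.Tendsto (fun n : ℕ => (16 * Real.log (n+1) + 16)/(3*n))
        Filter.atTop (nhds 0) := by
      have key : Filter.Tendsto
          (fun n : ℕ => (16/3) * (Real.log (n+1)/(n+1) * (((n:ℝ)+1)/n)) + (16/3) * (1/(n:ℝ)))
          Filter.atTop (nhds ((16/3) * (0 * 1) + (16/3) * 0)) := by
        exact ((hlog.mul hratio).const_mul _).add (hinv.const_mul _)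
      have key' : Filter.Tendsto
          (fun n : ℕ => (16/3) * (Real.log (n+1)/(n+1) * (((n:ℝ)+1)/n)) + (16/3) * (1/(n:ℝ)))
          Filter.atTop (nhds 0) := by simpa using key
      apply key'.congr'
      filter_upwards [Filter.eventually_ge_atTop 1] with n hn
      have hn' : (n:ℝ) > 0 := by exact_mod_cast hn
      have hn1 : (n:ℝ) + 1 > 0 := by linarith
      field_simp
    simpa using (Filter.Tendsto.const_add (2/3 : ℝ) hz)
  -- lower envelope
  have hlo : Filter.Tendsto (fun n : ℕ => 2/3 - 3/(3*(n:ℝ)))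
      Filter.atTop (nhds (2/3)) := by
    have hz : Filter.Tendsto (fun n : ℕ => 3/(3*(n:ℝ))) Filter.atTop (nhds 0) := by
      apply hinv.congr'
      filter_upwards [Filter.eventually_ge_atTop 1] with n hn
      have hn' : (n:ℝ) > 0 := by exact_mod_cast hn
      field_simp
    simpa using (Filter.Tendsto.const_sub (2/3 : ℝ) hz)
  apply tendsto_of_tendsto_of_tendsto_of_le_of_le' hlo hup
  · filter_upwards [Filter.eventually_ge_atTop 1] with n hn
    have hn' : (0:ℝ) < n := by exact_mod_cast hn
    have h := Cfun_lower n
    have hR : (2:ℝ)*n ≤ 3 * Cfun n + 3 := by exact_mod_cast h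
    have e : (2:ℝ)/3 - 3/(3*(n:ℝ)) = (2*n-3)/(3*n) := by
      field_simp
    rw [e, div_le_div_iff₀ (by positivity) hn']
    have hC : (0:ℝ) ≤ (Cfun n : ℝ) := Nat.cast_nonneg _
    nlinarith
  · filter_upwards [Filter.eventually_ge_atTop 1] with n hn
    have hn' : (0:ℝ) < n := by exact_mod_cast hn
    have h := Cfun_upper n
    rw [div_le_iff₀ hn']
    have expand : (2/3 + (16 * Real.log (n+1) + 16)/(3*n)) * n
        = (2*n + 16 * Real.log (n+1) + 16)/3 := by
      field_simp
      ring
    rw [expand]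
    linarith


/-- `B n / n → 2/3` as `n → ∞`. -/
theorem stmt_8 (B : ℕ → ℕ) (hB : IsBSeq B) :
    Filter.Tendsto (fun n : ℕ => (B n : ℝ) / n) Filter.atTop (nhds (2 / 3)) := by
  have h := BeqC B hB
  have heq : (fun n : ℕ => (B n : ℝ) / n) = fun n : ℕ => (Cfun n : ℝ) / n := by
    funext n; rw [h n]
  rw [heq]
  exact C_tendsto
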